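/- arXiv:1310.7626 — 8 statements merged into one kernel-verified Lean document; each statement's English description precedes it below -/
import Mathlib

section
/- For quaternions x and s with x not in the sphere [s] (equivalently, x² - 2Re(s)x + |s|² is invertible and s² - 2Re(x)s + |x|² is invertible), the two forms of the slice-hyperholomorphic Cauchy kernel coincide: -(x - s̄)(x² - 2Re(s)x + |s|²)⁻¹ = (s² - 2Re(x)s + |x|²)⁻¹(s - x̄). -/
open scoped Quaternion

lemma norm_sq_expand (x : ℍ[ℝ]) :
    ‖x‖ ^ 2 = x.re ^ 2 + x.imI ^ 2 + x.imJ ^ 2 + x.imK ^ 2 := by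
  rw [sq, ← Quaternion.normSq_eq_norm_mul_self, Quaternion.normSq_def']

lemma key_ne (x s : ℍ[ℝ]) (h : ¬(x.re = s.re ∧ ‖x‖ = ‖s‖)) :
    x ^ 2 - (2 * s.re) • x + ((‖s‖ ^ 2 : ℝ) : ℍ[ℝ]) ≠ 0 := by
  intro hA
  rw [norm_sq_expand s, Quaternion.ext_iff] at hA
  simp [pow_two, Quaternion.re_mul, Quaternion.imI_mul, Quaternion.imJ_mul,
    Quaternion.imK_mul] at hA
  obtain ⟨h1, h2, h3, h4⟩ := hA
  by_cases hre : x.re = s.re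
  · apply h
    refine ⟨hre, ?_⟩
    have hsq : ‖x‖ ^ 2 = ‖s‖ ^ 2 := by
      rw [norm_sq_expand, norm_sq_expand]
      linear_combination -h1 + 2 * x.re * hre
    nlinarith [norm_nonneg x, norm_nonneg s]
  · have hi : x.imI = 0 :=
      (mul_eq_zero.mp (show (x.re - s.re) * x.imI = 0 by linear_combination h2 / 2)).resolve_left
        (sub_ne_zero.mpr hre)
    have hj : x.imJ = 0 :=
      (mul_eq_zero.mp (show (x.re - s.re) * x.imJ = 0 by linear_combination h3 / 2)).resolve_left
        (sub_ne_zero.mpr hre)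
    have hk : x.imK = 0 :=
      (mul_eq_zero.mp (show (x.re - s.re) * x.imK = 0 by linear_combination h4 / 2)).resolve_left
        (sub_ne_zero.mpr hre)
    apply hre
    nlinarith [sq_nonneg (x.re - s.re), sq_nonneg s.imI, sq_nonneg s.imJ, sq_nonneg s.imK]

lemma kernel_identity (x s : ℍ[ℝ]) :
    (s ^ 2 - (2 * x.re) • s + ((‖x‖ ^ 2 : ℝ) : ℍ[ℝ])) * (-(x - star s)) =
      (s - star x) * (x ^ 2 - (2 * s.re) • x + ((‖s‖ ^ 2 : ℝ) : ℍ[ℝ])) := by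
  rw [norm_sq_expand x, norm_sq_expand s]
  ext <;>
    simp [pow_two, Quaternion.re_mul, Quaternion.imI_mul, Quaternion.imJ_mul,
      Quaternion.imK_mul] <;>
    ring

/-- For quaternions `x`, `s` with `x ∉ [s]`, the two forms of the
slice-hyperholomorphic Cauchy kernel coincide:
`-(x - s̄)(x² - 2Re(s)x + |s|²)⁻¹ = (s² - 2Re(x)s + |x|²)⁻¹(s - x̄)`. -/
theorem cauchy_kernel_form_I_eq_form_II (x s : ℍ[ℝ])
    (h : ¬(x.re = s.re ∧ ‖x‖ = ‖s‖)) :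
    -(x - star s) * (x ^ 2 - (2 * s.re) • x + ((‖s‖ ^ 2 : ℝ) : ℍ[ℝ]))⁻¹ =
      (s ^ 2 - (2 * x.re) • s + ((‖x‖ ^ 2 : ℝ) : ℍ[ℝ]))⁻¹ * (s - star x) := by
  have hA := key_ne x s h
  have hB := key_ne s x (fun hc => h ⟨hc.1.symm, hc.2.symm⟩)
  rw [mul_inv_eq_iff_eq_mul₀ hA, mul_assoc, eq_inv_mul_iff_mul_eq₀ hB]
  exact kernel_identity x s
end

section
/- For quaternions p, s with |p| < |s| and s ≠ 0, and for any quaternion A, the series Σ_{m≥0} pᵐ A s^{-1-m} converges and equals -(p² - 2Re(s)p + |s|²)⁻¹(pA - A s̄). -/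
open scoped Quaternion
open Quaternion Filter Finset

private lemma qchar_poly (q : ℍ[ℝ]) :
    q ^ 2 - (2 * q.re) • q + ((‖q‖ ^ 2 : ℝ) : ℍ[ℝ]) = 0 := by
  have h1 : ((2 * q.re : ℝ) : ℍ[ℝ]) = q + star q := (q.self_add_star').symm
  have h2 : ((‖q‖ ^ 2 : ℝ) : ℍ[ℝ]) = star q * q := by
    have h := normSq_eq_norm_mul_self q
    rw [star_mul_self, h]; push_cast; rw [sq]
  rw [← coe_mul_eq_smul, h1, h2]
  noncomm_ring

private lemma qQ_ne_zero (p s : ℍ[ℝ]) (hps : ‖p‖ < ‖s‖) :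
    p ^ 2 - (2 * s.re) • p + ((‖s‖ ^ 2 : ℝ) : ℍ[ℝ]) ≠ 0 := by
  intro hQ
  have hp := qchar_poly p
  have hps2 : ‖p‖ ^ 2 < ‖s‖ ^ 2 := by
    have h0 : (0:ℝ) ≤ ‖p‖ := norm_nonneg _
    nlinarith
  have f1 : (2 * s.re) • p = p ^ 2 + ((‖s‖ ^ 2 : ℝ) : ℍ[ℝ]) := by
    apply eq_of_sub_eq_zero
    have h : (2 * s.re) • p - (p ^ 2 + ((‖s‖ ^ 2 : ℝ) : ℍ[ℝ]))
        = -(p ^ 2 - (2 * s.re) • p + ((‖s‖ ^ 2 : ℝ) : ℍ[ℝ])) := by abel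
    rw [h, hQ, neg_zero]
  have f2 : (2 * p.re) • p = p ^ 2 + ((‖p‖ ^ 2 : ℝ) : ℍ[ℝ]) := by
    apply eq_of_sub_eq_zero
    have h : (2 * p.re) • p - (p ^ 2 + ((‖p‖ ^ 2 : ℝ) : ℍ[ℝ]))
        = -(p ^ 2 - (2 * p.re) • p + ((‖p‖ ^ 2 : ℝ) : ℍ[ℝ])) := by abel
    rw [h, hp, neg_zero]
  have hsub : (2 * s.re - 2 * p.re) • p = ((‖s‖ ^ 2 - ‖p‖ ^ 2 : ℝ) : ℍ[ℝ]) := by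
    rw [sub_smul, f1, f2, Quaternion.coe_sub]
    abel
  by_cases hc : 2 * s.re - 2 * p.re = 0
  · rw [hc, zero_smul] at hsub
    have : (‖s‖ ^ 2 - ‖p‖ ^ 2 : ℝ) = 0 := coe_injective hsub.symm
    linarith
  · set r : ℝ := (‖s‖ ^ 2 - ‖p‖ ^ 2) / (2 * s.re - 2 * p.re) with hr
    have h5 : (2 * s.re - 2 * p.re) • (r : ℍ[ℝ]) = ((‖s‖ ^ 2 - ‖p‖ ^ 2 : ℝ) : ℍ[ℝ]) := by
      rw [smul_coe]
      congr 1
      rw [hr, mul_div_assoc', mul_div_cancel_left₀ _ hc]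
    have hpr : p = (r : ℍ[ℝ]) := smul_right_injective _ hc (hsub.trans h5.symm)
    have hnr : |r| < ‖s‖ := by
      have hn : ‖(r : ℍ[ℝ])‖ = |r| := by rw [norm_coe, Real.norm_eq_abs]
      rw [hpr, hn] at hps; exact hps
    have hre : s.re ^ 2 ≤ ‖s‖ ^ 2 := by
      have h := normSq_eq_norm_mul_self s
      rw [normSq_def'] at h
      nlinarith [sq_nonneg s.imI, sq_nonneg s.imJ, sq_nonneg s.imK]
    have habs : |s.re| ≤ ‖s‖ := by
      nlinarith [abs_nonneg s.re, sq_abs s.re, norm_nonneg s]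
    rw [hpr] at hQ
    have hreq : (r ^ 2 - 2 * s.re * r + ‖s‖ ^ 2 : ℝ) = 0 := by
      rw [smul_coe] at hQ
      exact coe_injective ((by push_cast; ring :
        ((r ^ 2 - 2 * s.re * r + ‖s‖ ^ 2 : ℝ) : ℍ[ℝ])
          = (r : ℍ[ℝ]) ^ 2 - ((2 * s.re) * r : ℝ) + ((‖s‖ ^ 2 : ℝ) : ℍ[ℝ])).trans hQ)
    have h6 : s.re * r ≤ ‖s‖ * |r| :=
      calc s.re * r ≤ |s.re * r| := le_abs_self _
        _ = |s.re| * |r| := abs_mul _ _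
        _ ≤ ‖s‖ * |r| := mul_le_mul_of_nonneg_right habs (abs_nonneg r)
    have h7 : 0 < (|r| - ‖s‖) ^ 2 := by
      have hne := sub_ne_zero.mpr (ne_of_lt hnr)
      positivity
    nlinarith [sq_abs r]

private lemma qterm (p s A : ℍ[ℝ]) (hs : s ≠ 0) (m : ℕ) :
    (p ^ 2 - (2 * s.re) • p + ((‖s‖ ^ 2 : ℝ) : ℍ[ℝ])) * (p ^ m * A * s⁻¹ ^ (m + 1)) =
      ((fun i : ℕ => p ^ (i + 1) * A * s⁻¹ ^ i) (m + 1) - (fun i : ℕ => p ^ (i + 1) * A * s⁻¹ ^ i) m)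
        - ((fun i : ℕ => p ^ i * A * star s * s⁻¹ ^ i) (m + 1) - (fun i : ℕ => p ^ i * A * star s * s⁻¹ ^ i) m) := by
  simp only
  have hsp : (s : ℍ[ℝ]) ^ (m + 1) ≠ 0 := pow_ne_zero _ hs
  apply mul_right_cancel₀ hsp
  have h1 : s⁻¹ ^ (m + 1) * s ^ (m + 1) = 1 := by
    rw [inv_pow, inv_mul_cancel₀ hsp]
  have h2 : s⁻¹ ^ m * s ^ (m + 1) = s := by
    rw [inv_pow, pow_succ, ← mul_assoc, inv_mul_cancel₀ (pow_ne_zero _ hs), one_mul]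
  have e1 : ((2 * s.re : ℝ) : ℍ[ℝ]) = s + star s := (s.self_add_star').symm
  have e2 : ((‖s‖ ^ 2 : ℝ) : ℍ[ℝ]) = star s * s := by
    have h := normSq_eq_norm_mul_self s
    rw [star_mul_self, h]; push_cast; rw [sq]
  calc (p ^ 2 - (2 * s.re) • p + ((‖s‖ ^ 2 : ℝ) : ℍ[ℝ])) * (p ^ m * A * s⁻¹ ^ (m + 1)) * s ^ (m + 1)
      = (p ^ 2 - (2 * s.re) • p + ((‖s‖ ^ 2 : ℝ) : ℍ[ℝ])) * (p ^ m * A * (s⁻¹ ^ (m + 1) * s ^ (m + 1))) := by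
        simp [mul_assoc]
    _ = (p ^ 2 - (2 * s.re) • p + ((‖s‖ ^ 2 : ℝ) : ℍ[ℝ])) * (p ^ m * A) := by rw [h1, mul_one]
    _ = p ^ (m + 2) * A - p ^ (m + 1) * A * ((2 * s.re : ℝ) : ℍ[ℝ]) + p ^ m * A * ((‖s‖ ^ 2 : ℝ) : ℍ[ℝ]) := by
        have t1 : p ^ 2 * (p ^ m * A) = p ^ (m + 2) * A := by
          rw [← mul_assoc, ← pow_add, add_comm]
        have t2 : ((2 * s.re : ℝ) : ℍ[ℝ]) * p * (p ^ m * A) = p ^ (m + 1) * A * ((2 * s.re : ℝ) : ℍ[ℝ]) := by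
          calc ((2 * s.re : ℝ) : ℍ[ℝ]) * p * (p ^ m * A)
              = ((2 * s.re : ℝ) : ℍ[ℝ]) * (p * p ^ m * A) := by rw [mul_assoc, mul_assoc]
            _ = p * p ^ m * A * ((2 * s.re : ℝ) : ℍ[ℝ]) := coe_commutes _ _
            _ = p ^ (m + 1) * A * ((2 * s.re : ℝ) : ℍ[ℝ]) := by rw [← pow_succ']
        have t3 : ((‖s‖ ^ 2 : ℝ) : ℍ[ℝ]) * (p ^ m * A) = p ^ m * A * ((‖s‖ ^ 2 : ℝ) : ℍ[ℝ]) :=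
          coe_commutes _ _
        rw [← coe_mul_eq_smul, add_mul, sub_mul, t1, t2, t3]
    _ = p ^ (m + 2) * A - p ^ (m + 1) * A * (s + star s) + p ^ m * A * (star s * s) := by rw [e1, e2]
    _ = ((p ^ (m + 1 + 1) * A * s⁻¹ ^ (m + 1) - p ^ (m + 1) * A * s⁻¹ ^ m)
        - (p ^ (m + 1) * A * star s * s⁻¹ ^ (m + 1) - p ^ m * A * star s * s⁻¹ ^ m)) * s ^ (m + 1) := by
        simp only [sub_mul, mul_assoc, h1, h2, mul_one]
        noncomm_ring

/-- For quaternions `p`, `s` with `|p| < |s|` and `s ≠ 0` and any quaternion `A`,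
the series `Σ_{m≥0} pᵐ A s^{-1-m}` converges to
`-(p² - 2Re(s)p + |s|²)⁻¹ (pA - A s̄)`. -/
theorem left_kernel_series (p s A : ℍ[ℝ]) (hps : ‖p‖ < ‖s‖) (hs : s ≠ 0) :
    HasSum (fun m : ℕ => p ^ m * A * s⁻¹ ^ (m + 1))
      (-((p ^ 2 - (2 * s.re) • p + ((‖s‖ ^ 2 : ℝ) : ℍ[ℝ]))⁻¹ * (p * A - A * star s))) := by
  set Q : ℍ[ℝ] := p ^ 2 - (2 * s.re) • p + ((‖s‖ ^ 2 : ℝ) : ℍ[ℝ]) with hQdef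
  have hQ0 : Q ≠ 0 := qQ_ne_zero p s hps
  set f : ℕ → ℍ[ℝ] := fun m => p ^ m * A * s⁻¹ ^ (m + 1) with hf
  have hsn : (0:ℝ) < ‖s‖ := lt_of_le_of_lt (norm_nonneg p) hps
  have hr1 : ‖p‖ * ‖s‖⁻¹ < 1 := by
    rw [mul_inv_lt_iff₀ hsn, one_mul]; exact hps
  have hr0 : 0 ≤ ‖p‖ * ‖s‖⁻¹ := by positivity
  have hsum : Summable f := by
    apply Summable.of_norm
    have hnorm : ∀ m, ‖f m‖ = ‖A‖ * ‖s‖⁻¹ * (‖p‖ * ‖s‖⁻¹) ^ m := by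
      intro m
      simp only [hf, norm_mul, norm_pow, norm_inv]
      ring
    simp only [hnorm]
    exact (summable_geometric_of_lt_one hr0 hr1).mul_left _
  set T : ℍ[ℝ] := ∑' m, f m with hTdef
  have hT : HasSum f T := hsum.hasSum
  have hgeo : Tendsto (fun N : ℕ => (‖p‖ * ‖s‖⁻¹) ^ N) atTop (nhds 0) :=
    tendsto_pow_atTop_nhds_zero_of_lt_one hr0 hr1
  set a : ℕ → ℍ[ℝ] := fun i => p ^ (i + 1) * A * s⁻¹ ^ i with ha
  set b : ℕ → ℍ[ℝ] := fun i => p ^ i * A * star s * s⁻¹ ^ i with hb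
  have hlima : Tendsto a atTop (nhds 0) := by
    refine squeeze_zero_norm (a := fun N => ‖p‖ * ‖A‖ * (‖p‖ * ‖s‖⁻¹) ^ N) ?_ ?_
    · intro N
      simp only [ha, norm_mul, norm_pow, norm_inv, pow_succ]
      apply le_of_eq; ring
    · simpa using hgeo.const_mul (‖p‖ * ‖A‖)
  have hlimb : Tendsto b atTop (nhds 0) := by
    refine squeeze_zero_norm (a := fun N => ‖A‖ * ‖s‖ * (‖p‖ * ‖s‖⁻¹) ^ N) ?_ ?_
    · intro N
      simp only [hb, norm_mul, norm_pow, norm_inv, norm_star]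
      apply le_of_eq; ring
    · simpa using hgeo.const_mul (‖A‖ * ‖s‖)
  have hkey : ∀ N : ℕ, Q * ∑ m ∈ range N, f m = (a N - a 0) - (b N - b 0) := by
    intro N
    rw [mul_sum]
    rw [Finset.sum_congr rfl (fun m _ => qterm p s A hs m)]
    rw [sum_sub_distrib, Finset.sum_range_sub a, Finset.sum_range_sub b]
  have h1 : Tendsto (fun N : ℕ => Q * ∑ m ∈ range N, f m) atTop (nhds (Q * T)) :=
    (hT.tendsto_sum_nat).const_mul Q
  have h2 : Tendsto (fun N : ℕ => Q * ∑ m ∈ range N, f m) atTop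
      (nhds ((0 - a 0) - (0 - b 0))) := by
    simp only [hkey]
    exact (hlima.sub_const (a 0)).sub (hlimb.sub_const (b 0))
  have hQT : Q * T = (0 - a 0) - (0 - b 0) := tendsto_nhds_unique h1 h2
  have ha0 : a 0 = p * A := by simp [ha]
  have hb0 : b 0 = A * star s := by simp [hb]
  have hQT' : Q * T = -(p * A - A * star s) := by
    rw [hQT, ha0, hb0]; abel
  have hTval : T = -(Q⁻¹ * (p * A - A * star s)) := by
    have h := inv_mul_cancel_left₀ hQ0 T
    rw [hQT', mul_neg] at h
    exact h.symm
  exact hTval ▸ hT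
end

section
/- For quaternions p, s with |p| < |s| and s ≠ 0, and for any quaternion B, the series Σ_{m≥0} s^{-1-m} B pᵐ converges and equals -(Bp - s̄B)(p² - 2Re(s)p + |s|²)⁻¹, and this also equals (s² - 2Re(p)s + |p|²)⁻¹(sB - B p̄). -/
open scoped Quaternion
open Quaternion

private lemma key_left {A : Type*} [Ring A] (s t p B c d : A)
    (hc : ∀ x : A, c * x = x * c) (hd : ∀ x : A, d * x = x * d)
    (h1 : s * t = d) (h2 : s + t = c) :
    -(s * (B * p - t * B)) + (B * p - t * B) * p = B * (p ^ 2 - c * p + d) := by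
  have ht : t = c - s := by rw [← h2]; abel
  calc -(s * (B * p - t * B)) + (B * p - t * B) * p
      = -(s * (B * p)) + (s * t) * B + B * (p * p) - t * (B * p) := by noncomm_ring
    _ = -(s * (B * p)) + d * B + B * (p * p) - (c - s) * (B * p) := by rw [h1, ← ht]
    _ = B * d + B * (p * p) - c * (B * p) := by rw [hd B]; noncomm_ring
    _ = B * d + B * (p * p) - B * (c * p) := by rw [← mul_assoc c B p, hc B, mul_assoc]
    _ = B * (p ^ 2 - c * p + d) := by noncomm_ring

private lemma key_right {A : Type*} [Ring A] (s t p B c d : A)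
    (hc : ∀ x : A, c * x = x * c) (hd : ∀ x : A, d * x = x * d)
    (h1 : t * p = d) (h2 : p + t = c) :
    s * (s * B - B * t) - (s * B - B * t) * p = (s ^ 2 - c * s + d) * B := by
  have ht : t = c - p := by rw [← h2]; abel
  calc s * (s * B - B * t) - (s * B - B * t) * p
      = (s * s) * B - s * (B * t) - (s * B) * p + B * (t * p) := by noncomm_ring
    _ = (s * s) * B - s * (B * (c - p)) - (s * B) * p + B * d := by rw [h1, ← ht]
    _ = (s * s) * B - s * (B * c) + d * B := by rw [← hd B]; noncomm_ring
    _ = (s * s) * B - c * (s * B) + d * B := by rw [← hc B, ← mul_assoc s c B, ← hc s, mul_assoc c s B]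
    _ = (s ^ 2 - c * s + d) * B := by noncomm_ring

private lemma quat_char (p : ℍ[ℝ]) :
    p ^ 2 - (2 * p.re) • p + ((‖p‖ ^ 2 : ℝ) : ℍ[ℝ]) = 0 := by
  have h1 : ((‖p‖ ^ 2 : ℝ) : ℍ[ℝ]) = star p * p := by
    rw [star_mul_self]
    congr 1
    rw [normSq_eq_norm_mul_self, sq]
  have h2 : (2 * p.re) • p = (p + star p) * p := by
    rw [self_add_star', coe_mul_eq_smul]
  rw [h1, h2, sq]
  noncomm_ring

private lemma quat_norm_sq_re (s : ℍ[ℝ]) :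
    ‖s‖ ^ 2 = s.re ^ 2 + s.imI ^ 2 + s.imJ ^ 2 + s.imK ^ 2 := by
  rw [sq, ← normSq_eq_norm_mul_self, normSq_def']

private lemma quat_char_ne (p s : ℍ[ℝ]) (h : ‖p‖ ≠ ‖s‖) :
    p ^ 2 - (2 * s.re) • p + ((‖s‖ ^ 2 : ℝ) : ℍ[ℝ]) ≠ 0 := by
  intro h0
  have hch := quat_char p
  have norm_ne : ‖p‖ ^ 2 ≠ ‖s‖ ^ 2 := by
    intro heq
    have h7 : (‖p‖ - ‖s‖) * (‖p‖ + ‖s‖) = 0 := by nlinarith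
    rcases mul_eq_zero.mp h7 with h8 | h8
    · exact h (by linarith)
    · have hp0 := norm_nonneg p
      have hs0 := norm_nonneg s
      exact h (by linarith)
  have h4 : (2 * p.re - 2 * s.re) • p + (((‖s‖ ^ 2 - ‖p‖ ^ 2 : ℝ)) : ℍ[ℝ]) = 0 := by
    have e : (2 * p.re - 2 * s.re) • p + (((‖s‖ ^ 2 - ‖p‖ ^ 2 : ℝ)) : ℍ[ℝ])
        = (p ^ 2 - (2 * s.re) • p + ((‖s‖ ^ 2 : ℝ) : ℍ[ℝ]))
          - (p ^ 2 - (2 * p.re) • p + ((‖p‖ ^ 2 : ℝ) : ℍ[ℝ])) := by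
      rw [coe_sub, sub_smul]
      abel
    rw [e, h0, hch, sub_zero]
  by_cases hc : p.re = s.re
  · rw [hc, sub_self, zero_smul, zero_add] at h4
    rw [← coe_zero] at h4
    have : (‖s‖ ^ 2 - ‖p‖ ^ 2 : ℝ) = 0 := coe_injective h4
    exact norm_ne (by linarith)
  · have hc' : (2 * p.re - 2 * s.re : ℝ) ≠ 0 := by
      intro hz; apply hc; linarith
    have h5 : (2 * p.re - 2 * s.re) • p = ((‖p‖ ^ 2 - ‖s‖ ^ 2 : ℝ) : ℍ[ℝ]) := by
      have h6 : ((‖p‖ ^ 2 - ‖s‖ ^ 2 : ℝ) : ℍ[ℝ]) = -(((‖s‖ ^ 2 - ‖p‖ ^ 2 : ℝ)) : ℍ[ℝ]) := by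
        rw [← coe_neg]; congr 1; ring
      rw [h6]
      exact add_eq_zero_iff_eq_neg.mp h4
    set c : ℝ := 2 * p.re - 2 * s.re with hcdef
    have hp : p = (((c⁻¹ * (‖p‖ ^ 2 - ‖s‖ ^ 2) : ℝ)) : ℍ[ℝ]) := by
      have h7 : c⁻¹ • (c • p) = c⁻¹ • ((‖p‖ ^ 2 - ‖s‖ ^ 2 : ℝ) : ℍ[ℝ]) :=
        congrArg (fun x => c⁻¹ • x) h5
      rw [smul_smul, inv_mul_cancel₀ hc', one_smul, smul_coe] at h7
      exact h7
    obtain ⟨t, htdef⟩ : ∃ t : ℝ, t = c⁻¹ * (‖p‖ ^ 2 - ‖s‖ ^ 2) := ⟨_, rfl⟩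
    rw [← htdef] at hp
    have hnorm : ‖p‖ = |t| := by rw [hp, norm_coe, Real.norm_eq_abs]
    have hreal : t ^ 2 - 2 * s.re * t + ‖s‖ ^ 2 = 0 := by
      have h8 : ((t ^ 2 - 2 * s.re * t + ‖s‖ ^ 2 : ℝ) : ℍ[ℝ]) = 0 := by
        rw [coe_add, coe_sub, coe_pow, coe_mul, coe_mul_eq_smul, ← hp]
        exact h0
      rw [← coe_zero] at h8
      exact coe_injective h8
    have hre : s.re ^ 2 ≤ ‖s‖ ^ 2 := by
      rw [quat_norm_sq_re]
      nlinarith [sq_nonneg s.imI, sq_nonneg s.imJ, sq_nonneg s.imK]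
    apply norm_ne
    rw [hnorm, sq_abs]
    nlinarith [sq_nonneg (t - s.re)]

/-- For quaternions `p`, `s` with `|p| < |s|` and `s ≠ 0` and any quaternion `B`,
the series `Σ_{m≥0} s^{-1-m} B pᵐ` converges to
`-(Bp - s̄B)(p² - 2Re(s)p + |s|²)⁻¹`, which also equals
`(s² - 2Re(p)s + |p|²)⁻¹(sB - B p̄)`. -/
theorem right_kernel_series (p s B : ℍ[ℝ]) (hps : ‖p‖ < ‖s‖) (hs : s ≠ 0) :
    HasSum (fun m : ℕ => s⁻¹ ^ (m + 1) * B * p ^ m)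
      (-((B * p - star s * B) * (p ^ 2 - (2 * s.re) • p + ((‖s‖ ^ 2 : ℝ) : ℍ[ℝ]))⁻¹)) ∧
    -((B * p - star s * B) * (p ^ 2 - (2 * s.re) • p + ((‖s‖ ^ 2 : ℝ) : ℍ[ℝ]))⁻¹) =
      (s ^ 2 - (2 * p.re) • s + ((‖p‖ ^ 2 : ℝ) : ℍ[ℝ]))⁻¹ * (s * B - B * star p) := by
  have hQ : (p ^ 2 - (2 * s.re) • p + ((‖s‖ ^ 2 : ℝ) : ℍ[ℝ])) ≠ 0 :=
    quat_char_ne p s (ne_of_lt hps)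
  have hP : (s ^ 2 - (2 * p.re) • s + ((‖p‖ ^ 2 : ℝ) : ℍ[ℝ])) ≠ 0 :=
    quat_char_ne s p (ne_of_gt hps)
  set Q : ℍ[ℝ] := p ^ 2 - (2 * s.re) • p + ((‖s‖ ^ 2 : ℝ) : ℍ[ℝ]) with hQdef
  set P : ℍ[ℝ] := s ^ 2 - (2 * p.re) • s + ((‖p‖ ^ 2 : ℝ) : ℍ[ℝ]) with hPdef
  have hpQ : Commute p Q := by
    refine (((Commute.refl p).pow_right 2).sub_right ?_).add_right ?_
    · exact (Commute.refl p).smul_right _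
    · exact (coe_commute _ p).symm
  have hsP : Commute s P := by
    refine (((Commute.refl s).pow_right 2).sub_right ?_).add_right ?_
    · exact (Commute.refl s).smul_right _
    · exact (coe_commute _ s).symm
  -- uniqueness of the Sylvester equation solution
  have uniq : ∀ X Y : ℍ[ℝ], s * X - X * p = B → s * Y - Y * p = B → X = Y := by
    intro X Y hX hY
    have h := hX.trans hY.symm
    have hD : s * (X - Y) = (X - Y) * p := by
      calc s * (X - Y) = (s * X - X * p) - (s * Y - Y * p) + (X - Y) * p := by noncomm_ring
        _ = (X - Y) * p := by rw [h, sub_self, zero_add]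
    by_contra hne
    have hXY : X - Y ≠ 0 := sub_ne_zero.mpr (fun hxy => hne hxy)
    have hn := congrArg norm hD
    rw [norm_mul, norm_mul] at hn
    have h1 : ‖X - Y‖ ≠ 0 := norm_ne_zero_iff.mpr hXY
    rw [mul_comm] at hn
    have : ‖s‖ = ‖p‖ := mul_left_cancel₀ h1 hn
    exact absurd this (ne_of_gt hps)
  -- the first closed form solves the equation
  set X₁ : ℍ[ℝ] := -((B * p - star s * B) * Q⁻¹) with hX₁def
  have hsstar : s * star s = ((‖s‖ ^ 2 : ℝ) : ℍ[ℝ]) := by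
    rw [self_mul_star]
    congr 1
    rw [normSq_eq_norm_mul_self, sq]
  have hX1 : s * X₁ - X₁ * p = B := by
    apply mul_right_cancel₀ hQ
    have e1 : X₁ * Q = -(B * p - star s * B) := by
      rw [hX₁def, neg_mul, mul_assoc, inv_mul_cancel₀ hQ, mul_one]
    calc (s * X₁ - X₁ * p) * Q
        = s * (X₁ * Q) - (X₁ * Q) * p := by
          rw [sub_mul, mul_assoc s, mul_assoc X₁ p Q, hpQ.eq, ← mul_assoc X₁ Q p]
      _ = -(s * (B * p - star s * B)) + (B * p - star s * B) * p := by
          rw [e1]; noncomm_ring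
      _ = B * (p ^ 2 - ((2 * s.re : ℝ) : ℍ[ℝ]) * p + ((‖s‖ ^ 2 : ℝ) : ℍ[ℝ])) :=
          key_left s (star s) p B _ _ (fun x => coe_commutes _ x) (fun x => coe_commutes _ x)
            hsstar (self_add_star' s)
      _ = B * Q := by rw [coe_mul_eq_smul, hQdef]
  -- the second closed form solves the equation
  set X₂ : ℍ[ℝ] := P⁻¹ * (s * B - B * star p) with hX₂def
  have hpstar : star p * p = ((‖p‖ ^ 2 : ℝ) : ℍ[ℝ]) := by
    rw [star_mul_self]
    congr 1
    rw [normSq_eq_norm_mul_self, sq]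
  have hX2 : s * X₂ - X₂ * p = B := by
    apply mul_left_cancel₀ hP
    have e2 : P * X₂ = s * B - B * star p := by
      rw [hX₂def, ← mul_assoc, mul_inv_cancel₀ hP, one_mul]
    calc P * (s * X₂ - X₂ * p)
        = s * (P * X₂) - (P * X₂) * p := by
          rw [mul_sub, ← mul_assoc P s X₂, ← hsP.eq, mul_assoc s P X₂, ← mul_assoc P X₂ p]
      _ = s * (s * B - B * star p) - (s * B - B * star p) * p := by rw [e2]
      _ = (s ^ 2 - ((2 * p.re : ℝ) : ℍ[ℝ]) * s + ((‖p‖ ^ 2 : ℝ) : ℍ[ℝ])) * B :=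
          key_right s (star p) p B _ _ (fun x => coe_commutes _ x) (fun x => coe_commutes _ x)
            hpstar (self_add_star' p)
      _ = P * B := by rw [coe_mul_eq_smul, hPdef]
  -- summability
  have hs0 : ‖s‖ ≠ 0 := norm_ne_zero_iff.mpr hs
  have hsumm : Summable (fun m : ℕ => s⁻¹ ^ (m + 1) * B * p ^ m) := by
    apply Summable.of_norm
    have hnorm : ∀ m : ℕ, ‖s⁻¹ ^ (m + 1) * B * p ^ m‖
        = (‖s‖⁻¹ * ‖B‖) * (‖p‖ / ‖s‖) ^ m := by
      intro m
      rw [norm_mul, norm_mul, norm_pow, norm_pow, norm_inv, div_pow, inv_pow,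
        div_eq_mul_inv]
      ring
    simp only [hnorm]
    exact (summable_geometric_of_lt_one (by positivity)
      ((div_lt_one (norm_pos_iff.mpr hs)).mpr hps)).mul_left _
  have hT : HasSum (fun m : ℕ => s⁻¹ ^ (m + 1) * B * p ^ m)
      (∑' m : ℕ, s⁻¹ ^ (m + 1) * B * p ^ m) := hsumm.hasSum
  set T : ℍ[ℝ] := ∑' m : ℕ, s⁻¹ ^ (m + 1) * B * p ^ m with hTdef
  have hT2 : HasSum (fun m : ℕ => s⁻¹ ^ m * B * p ^ m) (s * T) := by
    have h := hT.mul_left s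
    have e : (fun m : ℕ => s * (s⁻¹ ^ (m + 1) * B * p ^ m))
        = fun m : ℕ => s⁻¹ ^ m * B * p ^ m := by
      funext m
      rw [← mul_assoc, ← mul_assoc, pow_succ', ← mul_assoc s, mul_inv_cancel₀ hs, one_mul]
    rwa [e] at h
  have hT3 : HasSum (fun m : ℕ => s⁻¹ ^ (m + 1) * B * p ^ (m + 1)) (T * p) := by
    have h := hT.mul_right p
    have e : (fun m : ℕ => s⁻¹ ^ (m + 1) * B * p ^ m * p)
        = fun m : ℕ => s⁻¹ ^ (m + 1) * B * p ^ (m + 1) := by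
      funext m
      rw [mul_assoc, ← pow_succ]
    rwa [e] at h
  have hT4 : HasSum (fun m : ℕ => s⁻¹ ^ m * B * p ^ m) (T * p + B) := by
    have h := (hasSum_nat_add_iff (f := fun m : ℕ => s⁻¹ ^ m * B * p ^ m) 1).mp hT3
    simpa using h
  have hkey : s * T - T * p = B := by
    have h := hT2.unique hT4
    rw [h]
    abel
  have hTX1 : T = X₁ := uniq T X₁ hkey hX1
  exact ⟨hTX1 ▸ hT, uniq X₁ X₂ hX1 hX2⟩
end

section
/- Partial sum identity: for quaternions p, s with p ∉ [s] (so that Q := p² - 2Re(s)p + |s|² is invertible) and s ≠ 0, and any quaternion A, for every natural number m: Σ_{j=0}^m pʲ A s^{-1-j} = -Q⁻¹(pA - A s̄) + p^{m+1} Q⁻¹(pA - A s̄) s^{-1-m}. -/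
open scoped Quaternion
open Quaternion

lemma aux_sum (p s A B : ℍ[ℝ]) (hs : s ≠ 0) (key : p * B = B * s + A) (m : ℕ) :
    ∑ j ∈ Finset.range (m + 1), p ^ j * A * s⁻¹ ^ (j + 1) =
      -B + p ^ (m + 1) * B * s⁻¹ ^ (m + 1) := by
  induction m with
  | zero =>
      rw [Finset.sum_range_one, pow_zero, one_mul, pow_one, pow_one, key, add_mul,
        mul_assoc B, mul_inv_cancel₀ hs, mul_one, neg_add_cancel_left]
  | succ n ih =>
      rw [Finset.sum_range_succ, ih]
      have hsp : s * s⁻¹ ^ (n + 2) = s⁻¹ ^ (n + 1) := by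
        rw [pow_succ', ← mul_assoc, mul_inv_cancel₀ hs, one_mul]
      have h2 : p ^ (n + 2) * B * s⁻¹ ^ (n + 2)
          = p ^ (n + 1) * B * s⁻¹ ^ (n + 1) + p ^ (n + 1) * A * s⁻¹ ^ (n + 2) := by
        calc p ^ (n + 2) * B * s⁻¹ ^ (n + 2)
            = p ^ (n + 1) * (p * B) * s⁻¹ ^ (n + 2) := by
              rw [pow_succ, mul_assoc (p ^ (n+1))]
          _ = p ^ (n + 1) * (B * (s * s⁻¹ ^ (n + 2))) + p ^ (n + 1) * A * s⁻¹ ^ (n + 2) := by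
              rw [key, mul_add, add_mul, mul_assoc (p ^ (n+1)) (B * s), mul_assoc B s]
          _ = _ := by rw [hsp, ← mul_assoc]
      rw [show n + 1 + 1 = n + 2 from rfl, h2, add_assoc]

/-- Partial sum identity: for quaternions `p`, `s` with `p ∉ [s]`
(so `Q := p² - 2Re(s)p + |s|²` is invertible), `s ≠ 0`, and any quaternion `A`,
`Σ_{j=0}^m pʲ A s^{-1-j} = -Q⁻¹(pA - A s̄) + p^{m+1} Q⁻¹(pA - A s̄) s^{-1-m}`. -/
theorem partial_sum_identity (p s A : ℍ[ℝ]) (h : ¬(p.re = s.re ∧ ‖p‖ = ‖s‖))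
    (hs : s ≠ 0) (m : ℕ) :
    ∑ j ∈ Finset.range (m + 1), p ^ j * A * s⁻¹ ^ (j + 1) =
      -((p ^ 2 - (2 * s.re) • p + ((‖s‖ ^ 2 : ℝ) : ℍ[ℝ]))⁻¹ * (p * A - A * star s)) +
        p ^ (m + 1) *
          ((p ^ 2 - (2 * s.re) • p + ((‖s‖ ^ 2 : ℝ) : ℍ[ℝ]))⁻¹ * (p * A - A * star s)) *
          s⁻¹ ^ (m + 1) := by
  have hns : (‖s‖ ^ 2 : ℝ) = normSq s := by
    rw [normSq_eq_norm_mul_self, sq]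
  set Q : ℍ[ℝ] := p ^ 2 - (2 * s.re) • p + ((‖s‖ ^ 2 : ℝ) : ℍ[ℝ]) with hQdef
  have hQ : Q ≠ 0 := by
    intro h0
    apply h
    have h1 := congrArg QuaternionAlgebra.re h0
    have h2 := congrArg QuaternionAlgebra.imI h0
    have h3 := congrArg QuaternionAlgebra.imJ h0
    have h4 := congrArg QuaternionAlgebra.imK h0
    simp only [hQdef, hns, normSq_def', re_add, re_sub, re_smul, re_coe, imI_add, imI_sub,
      imI_smul, imI_coe, imJ_add, imJ_sub, imJ_smul, imJ_coe, imK_add, imK_sub, imK_smul,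
      imK_coe, sq, re_mul, imI_mul, imJ_mul, imK_mul, re_zero, imI_zero, imJ_zero, imK_zero,
      smul_eq_mul] at h1 h2 h3 h4
    by_cases hre : p.re = s.re
    · refine ⟨hre, ?_⟩
      have hn2 : ‖p‖ ^ 2 = ‖s‖ ^ 2 := by
        rw [sq, sq, ← normSq_eq_norm_mul_self, ← normSq_eq_norm_mul_self, normSq_def',
          normSq_def']
        rw [hre] at h1 ⊢
        linear_combination -h1
      exact (sq_eq_sq₀ (norm_nonneg _) (norm_nonneg _)).mp hn2
    · exfalso
      have hd : p.re - s.re ≠ 0 := sub_ne_zero.mpr hre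
      have hI : p.imI = 0 := by
        have : p.imI * (2 * (p.re - s.re)) = 0 := by linarith [h2]
        rcases mul_eq_zero.mp this with h' | h'
        · exact h'
        · exact absurd (by linarith) hd
      have hJ : p.imJ = 0 := by
        have : p.imJ * (2 * (p.re - s.re)) = 0 := by linarith [h3]
        rcases mul_eq_zero.mp this with h' | h'
        · exact h'
        · exact absurd (by linarith) hd
      have hK : p.imK = 0 := by
        have : p.imK * (2 * (p.re - s.re)) = 0 := by linarith [h4]
        rcases mul_eq_zero.mp this with h' | h'
        · exact h'
        · exact absurd (by linarith) hd
      apply hre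
      nlinarith [h1, hI, hJ, hK, sq_nonneg s.imI, sq_nonneg s.imJ, sq_nonneg s.imK,
        sq_nonneg (p.re - s.re)]
  have hcomm : Commute p Q := by
    show p * Q = Q * p
    rw [hQdef, mul_add, add_mul, mul_sub, sub_mul, ← pow_succ, ← pow_succ',
      mul_smul_comm, smul_mul_assoc, coe_commutes]
  have hcomm' : p * Q⁻¹ = Q⁻¹ * p := (hcomm.inv_right₀).eq
  set B : ℍ[ℝ] := Q⁻¹ * (p * A - A * star s) with hBdef
  have key : p * B = B * s + A := by
    have hQA : p * (p * A - A * star s) = (p * A - A * star s) * s + Q * A := by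
      simp only [hQdef, hns]
      ext <;>
        simp only [re_mul, imI_mul, imJ_mul, imK_mul, re_add, imI_add, imJ_add, imK_add,
          re_sub, imI_sub, imJ_sub, imK_sub, re_smul, imI_smul, imJ_smul, imK_smul,
          re_coe, imI_coe, imJ_coe, imK_coe, re_star, imI_star, imJ_star, imK_star,
          normSq_def', pow_two, smul_eq_mul] <;>
        ring
    calc p * B = Q⁻¹ * (p * (p * A - A * star s)) := by
          rw [hBdef, ← mul_assoc, hcomm', mul_assoc]
      _ = Q⁻¹ * ((p * A - A * star s) * s) + Q⁻¹ * Q * A := by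
          rw [hQA, mul_add, mul_assoc]
      _ = B * s + A := by rw [inv_mul_cancel₀ hQ, one_mul, hBdef, mul_assoc]
  exact aux_sum p s A B hs key m
end

section
/- Right S-resolvent equation: under the same hypotheses, for S_R^{-1}(s,T) := -(T - s̄I)·Q_s(T)⁻¹ with Q_s(T) = T² - 2Re(s)T + |s|²I invertible, one has s·S_R^{-1}(s,T) - S_R^{-1}(s,T)·T = I, where s·S_R^{-1}(s,T) denotes S_R^{-1}(s,T) followed by left multiplication by s in the appropriate module sense. -/
set_option synthInstance.maxHeartbeats 1000000
set_option maxHeartbeats 1000000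


open scoped Quaternion
open MulOpposite

/-- Right S-resolvent equation: for a bounded right-linear operator `T` on a
two-sided quaternionic Banach space and `s ∈ ℍ` with
`Q_s(T) = T² - 2Re(s)T + |s|²I` invertible, the operator
`S_R⁻¹(s,T) = -(T - s̄I)·Q_s(T)⁻¹` satisfies `s·S_R⁻¹(s,T) - S_R⁻¹(s,T)·T = I`. -/
theorem right_S_resolvent_equation
    {V : Type*} [NormedAddCommGroup V] [NormedSpace ℝ V]
    [Module ℍ[ℝ] V] [Module ℍ[ℝ]ᵐᵒᵖ V]
    [IsScalarTower ℝ ℍ[ℝ] V] [IsScalarTower ℝ ℍ[ℝ]ᵐᵒᵖ V]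
    [SMulCommClass ℝ ℍ[ℝ] V] [SMulCommClass ℝ ℍ[ℝ]ᵐᵒᵖ V]
    [SMulCommClass ℍ[ℝ] ℍ[ℝ]ᵐᵒᵖ V]
    [ContinuousConstSMul ℍ[ℝ] V] [ContinuousConstSMul ℍ[ℝ]ᵐᵒᵖ V]
    (T : V →L[ℝ] V) (hT : ∀ (a : ℍ[ℝ]) (v : V), T (op a • v) = op a • T v)
    (s : ℍ[ℝ]) (hQ : IsUnit (T ^ 2 - (2 * s.re) • T + (‖s‖ ^ 2 : ℝ) • (1 : V →L[ℝ] V))) :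
    s • (-((T - star s • (1 : V →L[ℝ] V)) * Ring.inverse (T ^ 2 - (2 * s.re) • T + (‖s‖ ^ 2 : ℝ) • (1 : V →L[ℝ] V)))) - (-((T - star s • (1 : V →L[ℝ] V)) * Ring.inverse (T ^ 2 - (2 * s.re) • T + (‖s‖ ^ 2 : ℝ) • (1 : V →L[ℝ] V)))) * T = 1 := by
  set Q : V →L[ℝ] V := T ^ 2 - (2 * s.re) • T + (‖s‖ ^ 2 : ℝ) • (1 : V →L[ℝ] V) with hQdef
  set R : V →L[ℝ] V := Ring.inverse Q with hRdef
  set A : V →L[ℝ] V := T - star s • (1 : V →L[ℝ] V) with hAdef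
  -- smul-mul compatibility for the quaternionic scalar action on operators
  have hsm : ∀ (c : ℍ[ℝ]) (X Y : V →L[ℝ] V), (c • X) * Y = c • (X * Y) := by
    intro c X Y
    ext v
    simp
  -- real smul agrees with quaternionic smul via the coercion
  have hreal : ∀ (r : ℝ) (X : V →L[ℝ] V), (r • X) = ((r : ℍ[ℝ]) • X) := by
    intro r X
    ext v
    simp only [ContinuousLinearMap.smul_apply]
    rw [← Quaternion.algebraMap_def, algebraMap_smul]
  have h2 : Q * R = 1 := Ring.mul_inverse_cancel _ hQ
  have h1 : R * Q = 1 := Ring.inverse_mul_cancel _ hQ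
  -- T commutes with Q, hence with R
  have hTQ : T * Q = Q * T := by
    simp only [hQdef, mul_add, add_mul, mul_sub, sub_mul, mul_smul_comm, smul_mul_assoc,
      mul_one, one_mul, pow_two, mul_assoc]
  have hTR : R * T = T * R := by
    calc R * T = R * T * (Q * R) := by rw [h2, mul_one]
    _ = R * (T * Q) * R := by simp only [mul_assoc]
    _ = R * (Q * T) * R := by rw [hTQ]
    _ = (R * Q) * (T * R) := by simp only [mul_assoc]
    _ = T * R := by rw [h1, one_mul]
  have e1 : (star s • (1 : V →L[ℝ] V)) * T = star s • T := by rw [hsm, one_mul]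
  have e2 : s • (star s • (1 : V →L[ℝ] V)) = (‖s‖ ^ 2 : ℝ) • (1 : V →L[ℝ] V) := by
    rw [smul_smul, Quaternion.self_mul_star, ← hreal, Quaternion.normSq_eq_norm_mul_self, ← sq]
  have e3 : star s • T + s • T = (2 * s.re : ℝ) • T := by
    rw [← add_smul, Quaternion.star_add_self', ← hreal]
  -- key algebraic identity: A*T - s•A = Q
  have key : A * T - s • A = Q := by
    rw [hAdef, sub_mul, smul_sub, e1, e2, hQdef, pow_two T, ← e3]
    abel
  rw [smul_neg, neg_mul, sub_neg_eq_add, ← hsm s A R, mul_assoc A R T, hTR, ← mul_assoc,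
    neg_add_eq_sub, ← sub_mul, key, h2]
end

section
/- Equivalence of the two forms of the resolvent equation reduces to the scalar identity: for quaternions s, p with p ∉ [s] and any quaternion B, (s̄B - Bp)(p² - 2Re(s)p + |s|²)⁻¹ = (s² - 2Re(p)s + |p|²)⁻¹(sB - B p̄). -/
open scoped Quaternion

open Quaternion in
lemma aux_norm_sq (q : ℍ[ℝ]) :
    ‖q‖ ^ 2 = q.re ^ 2 + q.imI ^ 2 + q.imJ ^ 2 + q.imK ^ 2 := by
  rw [sq, ← Quaternion.normSq_eq_norm_mul_self, Quaternion.normSq_def']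

open Quaternion in
lemma aux_ne_zero (s q : ℍ[ℝ]) (h : ¬(q.re = s.re ∧ ‖q‖ = ‖s‖)) :
    q ^ 2 - (2 * s.re) • q + ((‖s‖ ^ 2 : ℝ) : ℍ[ℝ]) ≠ 0 := by
  intro h0
  have hq := aux_norm_sq q
  have hs := aux_norm_sq s
  have h1 := congrArg QuaternionAlgebra.re h0
  have h2 := congrArg QuaternionAlgebra.imI h0
  have h3 := congrArg QuaternionAlgebra.imJ h0
  have h4 := congrArg QuaternionAlgebra.imK h0
  simp only [pow_two, Quaternion.re_add, Quaternion.re_sub, Quaternion.re_mul,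
    Quaternion.re_smul, Quaternion.re_coe, Quaternion.re_zero,
    Quaternion.imI_add, Quaternion.imI_sub, Quaternion.imI_mul,
    Quaternion.imI_smul, Quaternion.imI_coe, Quaternion.imI_zero,
    Quaternion.imJ_add, Quaternion.imJ_sub, Quaternion.imJ_mul,
    Quaternion.imJ_smul, Quaternion.imJ_coe, Quaternion.imJ_zero,
    Quaternion.imK_add, Quaternion.imK_sub, Quaternion.imK_mul,
    Quaternion.imK_smul, Quaternion.imK_coe, Quaternion.imK_zero,
    smul_eq_mul] at h1 h2 h3 h4
  by_cases hre : q.re = s.re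
  · apply h
    refine ⟨hre, ?_⟩
    rw [hre] at h1 hq
    have hsq : ‖q‖ ^ 2 = ‖s‖ ^ 2 := by nlinarith [h1, hq]
    calc ‖q‖ = Real.sqrt (‖q‖ ^ 2) := by rw [Real.sqrt_sq (norm_nonneg q)]
      _ = Real.sqrt (‖s‖ ^ 2) := by rw [hsq]
      _ = ‖s‖ := Real.sqrt_sq (norm_nonneg s)
  · have hfac : q.re - s.re ≠ 0 := sub_ne_zero.mpr hre
    have hI : q.imI = 0 := by
      rcases mul_eq_zero.mp (show (q.re - s.re) * q.imI = 0 by linarith) with h' | h'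
      · exact absurd h' hfac
      · exact h'
    have hJ : q.imJ = 0 := by
      rcases mul_eq_zero.mp (show (q.re - s.re) * q.imJ = 0 by linarith) with h' | h'
      · exact absurd h' hfac
      · exact h'
    have hK : q.imK = 0 := by
      rcases mul_eq_zero.mp (show (q.re - s.re) * q.imK = 0 by linarith) with h' | h'
      · exact absurd h' hfac
      · exact h'
    have hpos : (q.re - s.re) ^ 2 > 0 := by positivity
    nlinarith [sq_nonneg s.imI, sq_nonneg s.imJ, sq_nonneg s.imK]

/-- Scalar identity underlying the equivalence of the two forms of the resolvent
equation: for quaternions `s`, `p` with `p ∉ [s]` and any quaternion `B`,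
`(s̄B - Bp)(p² - 2Re(s)p + |s|²)⁻¹ = (s² - 2Re(p)s + |p|²)⁻¹(sB - B p̄)`. -/
theorem scalar_two_forms_identity (s p B : ℍ[ℝ])
    (h : ¬(p.re = s.re ∧ ‖p‖ = ‖s‖)) :
    (star s * B - B * p) * (p ^ 2 - (2 * s.re) • p + ((‖s‖ ^ 2 : ℝ) : ℍ[ℝ]))⁻¹ =
      (s ^ 2 - (2 * p.re) • s + ((‖p‖ ^ 2 : ℝ) : ℍ[ℝ]))⁻¹ * (s * B - B * star p) := by
  set Qp := p ^ 2 - (2 * s.re) • p + ((‖s‖ ^ 2 : ℝ) : ℍ[ℝ]) with hQp_def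
  set Qs := s ^ 2 - (2 * p.re) • s + ((‖p‖ ^ 2 : ℝ) : ℍ[ℝ]) with hQs_def
  have hQp : Qp ≠ 0 := aux_ne_zero s p h
  have hQs : Qs ≠ 0 := aux_ne_zero p s (fun ⟨a, b⟩ => h ⟨a.symm, b.symm⟩)
  have key : Qs * (star s * B - B * p) = (s * B - B * star p) * Qp := by
    rw [hQp_def, hQs_def, aux_norm_sq s, aux_norm_sq p]
    ext <;>
      simp only [pow_two, Quaternion.re_add, Quaternion.re_sub, Quaternion.re_mul,
        Quaternion.re_smul, Quaternion.re_coe, Quaternion.re_star,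
        Quaternion.imI_add, Quaternion.imI_sub, Quaternion.imI_mul,
        Quaternion.imI_smul, Quaternion.imI_coe, Quaternion.imI_star,
        Quaternion.imJ_add, Quaternion.imJ_sub, Quaternion.imJ_mul,
        Quaternion.imJ_smul, Quaternion.imJ_coe, Quaternion.imJ_star,
        Quaternion.imK_add, Quaternion.imK_sub, Quaternion.imK_mul,
        Quaternion.imK_smul, Quaternion.imK_coe, Quaternion.imK_star,
        smul_eq_mul, neg_neg] <;>
      ring
  calc (star s * B - B * p) * Qp⁻¹
      = Qs⁻¹ * (Qs * (star s * B - B * p)) * Qp⁻¹ := by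
        rw [← mul_assoc, inv_mul_cancel₀ hQs, one_mul]
    _ = Qs⁻¹ * ((s * B - B * star p) * Qp) * Qp⁻¹ := by rw [key]
    _ = Qs⁻¹ * (s * B - B * star p) := by
        rw [mul_assoc, mul_assoc, mul_inv_cancel₀ hQp, mul_one]
end

section
/- The S-spectrum of a bounded quaternionic linear operator on a nonzero quaternionic Banach space is a compact subset of ℍ (closed and bounded). -/
open scoped Quaternion
open MulOpposite

/-- The S-spectrum
`σ_S(T) = {s : ℍ | T² - 2Re(s)T + |s|²I is not invertible}` of a bounded
quaternionic linear operator on a nonzero quaternionic Banach space is compact. -/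
theorem S_spectrum_isCompact
    {V : Type*} [NormedAddCommGroup V] [NormedSpace ℝ V] [CompleteSpace V]
    [Module ℍ[ℝ] V] [Module ℍ[ℝ]ᵐᵒᵖ V]
    [IsScalarTower ℝ ℍ[ℝ] V] [IsScalarTower ℝ ℍ[ℝ]ᵐᵒᵖ V]
    [SMulCommClass ℝ ℍ[ℝ] V] [SMulCommClass ℝ ℍ[ℝ]ᵐᵒᵖ V]
    [SMulCommClass ℍ[ℝ] ℍ[ℝ]ᵐᵒᵖ V]
    [ContinuousConstSMul ℍ[ℝ] V] [ContinuousConstSMul ℍ[ℝ]ᵐᵒᵖ V] [Nontrivial V]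
    (T : V →L[ℝ] V) (hT : ∀ (a : ℍ[ℝ]) (v : V), T (op a • v) = op a • T v) :
    IsCompact {s : ℍ[ℝ] |
      ¬IsUnit (T ^ 2 - (2 * s.re) • T + (‖s‖ ^ 2 : ℝ) • (1 : V →L[ℝ] V))} := by
  set f : ℍ[ℝ] → (V →L[ℝ] V) :=
    fun s => T ^ 2 - (2 * s.re) • T + (‖s‖ ^ 2 : ℝ) • (1 : V →L[ℝ] V) with hf
  have hcont : Continuous f := by
    apply Continuous.add
    · exact continuous_const.sub
        ((continuous_const.mul Quaternion.continuous_re).smul continuous_const)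
    · exact ((continuous_norm.pow 2).smul continuous_const)
  have hclosed : IsClosed {s : ℍ[ℝ] | ¬ IsUnit (f s)} := by
    have : {s : ℍ[ℝ] | ¬ IsUnit (f s)} = (f ⁻¹' {x | IsUnit x})ᶜ := rfl
    rw [this]
    exact (Units.isOpen.preimage hcont).isClosed_compl
  have hsub : {s : ℍ[ℝ] | ¬ IsUnit (f s)} ⊆ Metric.closedBall 0 (3 * ‖T‖ + 1) := by
    intro s hs
    simp only [Metric.mem_closedBall, dist_zero_right]
    by_contra hbig
    push_neg at hbig
    apply hs
    have hT0 : (0 : ℝ) ≤ ‖T‖ := norm_nonneg T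
    have hs0 : (0 : ℝ) < ‖s‖ := by linarith
    have hc : (0 : ℝ) < ‖s‖ ^ 2 := by positivity
    set c : ℝ := ‖s‖ ^ 2 with hcdef
    set x : V →L[ℝ] V := (2 * s.re / c) • T - (1 / c) • T ^ 2 with hx
    have hre : |s.re| ≤ ‖s‖ := by
      have h1 := Quaternion.normSq_eq_norm_mul_self s
      rw [Quaternion.normSq_def'] at h1
      rw [abs_le]
      constructor <;> nlinarith [sq_nonneg s.imI, sq_nonneg s.imJ, sq_nonneg s.imK,
        norm_nonneg s]
    have hxnorm : ‖x‖ < 1 := by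
      have h1 : ‖x‖ ≤ |2 * s.re / c| * ‖T‖ + |1 / c| * ‖T ^ 2‖ := by
        calc ‖x‖ ≤ ‖(2 * s.re / c) • T‖ + ‖(1 / c) • T ^ 2‖ := norm_sub_le _ _
          _ = |2 * s.re / c| * ‖T‖ + |1 / c| * ‖T ^ 2‖ := by
              rw [@norm_smul ℝ _ _ _ _ _ (2 * s.re / c) T,
                @norm_smul ℝ _ _ _ _ _ (1 / c) (T ^ 2), Real.norm_eq_abs, Real.norm_eq_abs]
      have hT2 : ‖T ^ 2‖ ≤ ‖T‖ * ‖T‖ := by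
        rw [sq]; exact norm_mul_le T T
      have h2 : |2 * s.re / c| ≤ 2 * ‖s‖ / c := by
        rw [abs_div, abs_of_pos hc, abs_mul, abs_two]
        gcongr
      have h3 : |1 / c| = 1 / c := abs_of_pos (by positivity)
      have h4 : (2 * ‖s‖ / c) * ‖T‖ + (1 / c) * (‖T‖ * ‖T‖)
          = (2 * ‖s‖ * ‖T‖ + ‖T‖ * ‖T‖) / c := by ring
      have h5 : 2 * ‖s‖ * ‖T‖ + ‖T‖ * ‖T‖ < c := by
        rw [hcdef]; nlinarith
      have h6 : (2 * ‖s‖ / c) * ‖T‖ + (1 / c) * (‖T‖ * ‖T‖) < 1 := by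
        rw [h4, div_lt_one hc]; exact h5
      have h7 : |2 * s.re / c| * ‖T‖ + |1 / c| * ‖T ^ 2‖
          ≤ (2 * ‖s‖ / c) * ‖T‖ + (1 / c) * (‖T‖ * ‖T‖) := by
        rw [h3]; gcongr
      linarith
    have hfactor : f s = c • ((1 : V →L[ℝ] V) - x) := by
      rw [hx, smul_sub, smul_sub, smul_smul, smul_smul,
        mul_div_cancel₀ _ (ne_of_gt hc), one_div, mul_inv_cancel₀ (ne_of_gt hc), one_smul]
      simp only [hf]
      abel
    rw [hfactor]
    have hu1 : IsUnit ((1 : V →L[ℝ] V) - x) := (Units.oneSub x hxnorm).isUnit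
    have hcu : IsUnit ((algebraMap ℝ (V →L[ℝ] V)) c) :=
      (isUnit_iff_ne_zero.mpr (ne_of_gt hc)).map (algebraMap ℝ (V →L[ℝ] V))
    rw [show c • ((1 : V →L[ℝ] V) - x) = (algebraMap ℝ (V →L[ℝ] V)) c * ((1:V→L[ℝ]V) - x)
      from Algebra.smul_def c _]
    exact hcu.mul hu1
  exact (isCompact_closedBall (0 : ℍ[ℝ]) _).of_isClosed_subset hclosed hsub
end

section
/- Algebraic derivation step: let T be a bounded quaternionic operator and s, p with Q_s(T), Q_p(T) invertible. Using only the left S-resolvent equation S_L^{-1}(p,T)p = T S_L^{-1}(p,T) + I and the right S-resolvent equation S_R^{-1}(s,T)T = s S_R^{-1}(s,T) - I, one has: S_R^{-1}(s,T)S_L^{-1}(p,T)(p² - 2Re(s)p + |s|²) = (s² - 2Re(s)s + |s|²)S_R^{-1}(s,T)S_L^{-1}(p,T) + [S_R^{-1}(s,T) - S_L^{-1}(p,T)]p - s̄[S_R^{-1}(s,T) - S_L^{-1}(p,T)]. -/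
open scoped Quaternion
open MulOpposite

/-- Algebraic derivation step for the new resolvent equation: if `SL` and `SR` are
bounded operators satisfying the left and right S-resolvent equations
`SL·p = T·SL + I` and `SR·T = s·SR - I`, then
`SR SL (p² - 2Re(s)p + |s|²) = (s² - 2Re(s)s + |s|²) SR SL + [SR - SL]p - s̄[SR - SL]`. -/
theorem resolvent_equation_derivation_step
    {V : Type*} [NormedAddCommGroup V] [NormedSpace ℝ V]
    [Module ℍ[ℝ] V] [Module ℍ[ℝ]ᵐᵒᵖ V]
    [IsScalarTower ℝ ℍ[ℝ] V] [IsScalarTower ℝ ℍ[ℝ]ᵐᵒᵖ V]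
    [SMulCommClass ℝ ℍ[ℝ] V] [SMulCommClass ℝ ℍ[ℝ]ᵐᵒᵖ V]
    [SMulCommClass ℍ[ℝ] ℍ[ℝ]ᵐᵒᵖ V]
    [ContinuousConstSMul ℍ[ℝ] V] [ContinuousConstSMul ℍ[ℝ]ᵐᵒᵖ V]
    (T : V →L[ℝ] V) (hT : ∀ (a : ℍ[ℝ]) (v : V), T (op a • v) = op a • T v)
    (s p : ℍ[ℝ]) (hQs : IsUnit (T ^ 2 - (2 * s.re) • T + (‖s‖ ^ 2 : ℝ) • (1 : V →L[ℝ] V))) (hQp : IsUnit (T ^ 2 - (2 * p.re) • T + (‖p‖ ^ 2 : ℝ) • (1 : V →L[ℝ] V)))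
    (SL SR : V →L[ℝ] V)
    (hL : op p • SL = T * SL + 1)
    (hR : SR * T = s • SR - 1) :
    op (p ^ 2 - (2 * s.re) • p + ((‖s‖ ^ 2 : ℝ) : ℍ[ℝ])) • (SR * SL) =
      (s ^ 2 - (2 * s.re) • s + ((‖s‖ ^ 2 : ℝ) : ℍ[ℝ])) • (SR * SL) +
        op p • (SR - SL) - star s • (SR - SL) := by
  -- quaternion characteristic identity
  have hstar : star s = ((2 * s.re : ℝ) : ℍ[ℝ]) - s := by
    rw [eq_sub_iff_add_eq, add_comm, Quaternion.self_add_star']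
  have hchar : s ^ 2 - (2 * s.re) • s + ((‖s‖ ^ 2 : ℝ) : ℍ[ℝ]) = 0 := by
    have h1 : s * star s = ((‖s‖ ^ 2 : ℝ) : ℍ[ℝ]) := by
      rw [Quaternion.self_mul_star, Quaternion.normSq_eq_norm_mul_self, sq]
    rw [hstar, mul_sub] at h1
    have h3 : (2 * s.re) • s = ((2 * s.re : ℝ) : ℍ[ℝ]) * s := by
      rw [Quaternion.coe_mul_eq_smul]
    have h4 : s * ((2 * s.re : ℝ) : ℍ[ℝ]) = ((2 * s.re : ℝ) : ℍ[ℝ]) * s :=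
      (Quaternion.coe_commutes _ _).symm
    rw [h4] at h1
    rw [h3, sq, ← h1]; abel
  have hs2 : s ^ 2 = (2 * s.re) • s - ((‖s‖ ^ 2 : ℝ) : ℍ[ℝ]) := by
    rw [← sub_eq_zero, ← hchar]; abel
  have hcoe : ∀ (r : ℝ) (x : V), ((r : ℍ[ℝ])) • x = r • x := fun r x => by
    rw [show (r : ℍ[ℝ]) = algebraMap ℝ ℍ[ℝ] r from rfl, algebraMap_smul]
  have hcoeop : ∀ (r : ℝ) (x : V), op ((r : ℍ[ℝ])) • x = r • x := fun r x => by
    have h : ((r : ℍ[ℝ])) = r • (1 : ℍ[ℝ]) := by rw [← Quaternion.coe_mul_eq_smul, mul_one]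
    rw [h, op_smul, op_one, smul_assoc, one_smul]
  have k1 : ∀ x : V, s • s • x = (2 * s.re) • s • x - (‖s‖ ^ 2 : ℝ) • x := fun x => by
    rw [smul_smul, ← sq, hs2, sub_smul, smul_assoc, hcoe]
  have k2 : ∀ x : V, star s • x = (2 * s.re) • x - s • x := fun x => by
    rw [hstar, sub_smul, hcoe]
  -- pointwise hypotheses
  have hRv : ∀ v : V, SR (T v) = s • SR v - v := fun v => by
    have := ContinuousLinearMap.ext_iff.mp hR v
    simpa using this
  have hLv : ∀ v : V, op p • SL v = T (SL v) + v := fun v => by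
    have := ContinuousLinearMap.ext_iff.mp hL v
    simpa using this
  set Qs := T ^ 2 - (2 * s.re) • T + (‖s‖ ^ 2 : ℝ) • (1 : V →L[ℝ] V) with hQsdef
  obtain ⟨u, hu⟩ := hQs
  set B : V →L[ℝ] V := ↑u⁻¹ with hBdef
  have hQB : ∀ v, Qs (B v) = v := fun v => by
    have h : Qs * B = 1 := by rw [← hu, hBdef]; exact_mod_cast u.mul_inv
    have := ContinuousLinearMap.ext_iff.mp h v
    simpa using this
  have hQv : ∀ v, Qs v = T (T v) - (2 * s.re) • T v + (‖s‖ ^ 2 : ℝ) • v := fun v => by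
    simp [hQsdef, pow_two]
  have hQcomm : ∀ v, Qs (op p • v) = op p • Qs v := fun v => by
    rw [hQv (op p • v), hQv v, hT, hT, smul_comm ((2:ℝ) * s.re) (op p),
      smul_comm (‖s‖ ^ 2 : ℝ) (op p), smul_add (op p), smul_sub (op p)]
  -- SR ∘ Qs = (star s) • 1 - T, pointwise
  have hSRQs : ∀ v, SR (Qs v) = star s • v - T v := fun v => by
    rw [hQv, map_add, map_sub, map_smul, map_smul, hRv, hRv, smul_sub s, k1 (SR v),
      smul_sub ((2 : ℝ) * s.re), k2 v]
    abel
  have hSRcomm : ∀ v, SR (op p • v) = op p • SR v := fun v => by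
    conv_lhs => rw [← hQB v, ← hQcomm, hSRQs]
    conv_rhs => rw [← hQB v, hSRQs]
    rw [hT, smul_sub, smul_comm (star s) (op p)]
  -- main computation
  rw [hchar, zero_smul]
  ext v
  simp only [ContinuousLinearMap.smul_apply, ContinuousLinearMap.mul_apply,
    ContinuousLinearMap.sub_apply, ContinuousLinearMap.add_apply, zero_add]
  have hE1 : op p • SR (SL v) = s • SR (SL v) - SL v + SR v := by
    rw [← hSRcomm, hLv, map_add, hRv]
  rw [op_add, op_sub, op_pow, op_smul, add_smul, sub_smul, sq, mul_smul, hcoeop,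
    smul_assoc, hE1]
  rw [smul_add (op p), smul_sub (op p), ← smul_comm s (op p), hE1, hLv]
  rw [smul_add s, smul_sub s, k1 (SR (SL v)), smul_add ((2:ℝ)*s.re), smul_sub ((2:ℝ)*s.re)]
  rw [smul_sub (op p), smul_sub (star s), k2 (SR v), k2 (SL v), hLv]
  abel
end
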